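/- Two distinct runs R1 and R2 in a string T overlap in fewer than per(R1) + per(R2) positions. -/
import Mathlib


/-- `p` is a period of the string (list) `S`. -/
def IsPeriod {α : Type*} (S : List α) (p : ℕ) : Prop :=
  0 < p ∧ ∀ i, i + p < S.length → S[i]? = S[i + p]?

/-- The smallest period of `S`. -/
noncomputable def minPeriod {α : Type*} (S : List α) : ℕ :=
  sInf {p | IsPeriod S p}

/-- `P` occurs in `S` at (0-indexed) position `i`. -/
def OccursAt {α : Type*} (P S : List α) (i : ℕ) : Prop :=
  (S.drop i).take P.length = P ∧ i + P.length ≤ S.length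

/-- The fragment `T[a..b]` (0-indexed, inclusive). -/
def frag {α : Type*} (T : List α) (a b : ℕ) : List α :=
  (T.drop a).take (b + 1 - a)

/-- `T[a..b]` is a run (maximal periodic fragment) of `T`. -/
def IsRun {α : Type*} (T : List α) (a b : ℕ) : Prop :=
  a ≤ b ∧ b < T.length ∧
  2 * minPeriod (frag T a b) ≤ b + 1 - a ∧
  (a = 0 ∨ T[a - 1]? ≠ T[a - 1 + minPeriod (frag T a b)]?) ∧
  (b + 1 = T.length ∨ T[b + 1]? ≠ T[b + 1 - minPeriod (frag T a b)]?)

/-- The occurrence of the square `U · U` at position `s` of `T` is induced by the run `T[a..b]`. -/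
def InducedOcc {α : Type*} (T U : List α) (s a b : ℕ) : Prop :=
  U ≠ [] ∧ IsRun T a b ∧ OccursAt (U ++ U) T s ∧ a ≤ s ∧
  s + 2 * U.length ≤ b + 1 ∧ minPeriod U = minPeriod (frag T a b)

/-- The `k`-th power `V^k` of a string `V`. -/
def listPow {α : Type*} (V : List α) (k : ℕ) : List α :=
  (List.replicate k V).flatten

/-- period on the index range [a,b] of T -/
def Per {α : Type*} (T : List α) (a b p : ℕ) : Prop :=
  ∀ i, a ≤ i → i + p ≤ b → T[i]? = T[i + p]?

lemma minPeriod_isPeriod {α : Type*} (S : List α) : IsPeriod S (minPeriod S) := by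
  have h : (S.length + 1) ∈ {p | IsPeriod S p} := ⟨Nat.succ_pos _, fun i hi => by omega⟩
  exact Nat.sInf_mem ⟨_, h⟩

lemma minPeriod_le {α : Type*} {S : List α} {p : ℕ} (h : IsPeriod S p) : minPeriod S ≤ p :=
  Nat.sInf_le h

lemma frag_getElem? {α : Type*} {T : List α} {a b i : ℕ} (hi : i < b + 1 - a) :
    (frag T a b)[i]? = T[a + i]? := by
  rw [frag, List.getElem?_take, if_pos hi, List.getElem?_drop]

lemma frag_length {α : Type*} {T : List α} {a b : ℕ} (hab : a ≤ b) (hb : b < T.length) :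
    (frag T a b).length = b + 1 - a := by
  simp [frag]; omega

lemma isPeriod_frag_iff {α : Type*} {T : List α} {a b p : ℕ} (hab : a ≤ b) (hb : b < T.length) :
    IsPeriod (frag T a b) p ↔ 0 < p ∧ Per T a b p := by
  rw [IsPeriod, frag_length hab hb]
  constructor
  · rintro ⟨hp, h⟩
    refine ⟨hp, fun i hi hip => ?_⟩
    have := h (i - a) (by omega)
    rwa [frag_getElem? (by omega), frag_getElem? (by omega),
      Nat.add_sub_cancel' hi, show a + (i - a + p) = i + p by omega] at this
  · rintro ⟨hp, h⟩
    refine ⟨hp, fun i hip => ?_⟩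
    rw [frag_getElem? (by omega), frag_getElem? (by omega), ← Nat.add_assoc]
    exact h (a + i) (by omega) (by omega)

lemma Per.mono {α : Type*} {T : List α} {a b a' b' p : ℕ} (h : Per T a b p)
    (ha : a ≤ a') (hb : b' ≤ b) : Per T a' b' p :=
  fun i hi hip => h i (by omega) (by omega)

lemma Per.step {α : Type*} {T : List α} {a b p : ℕ} (h : Per T a b p) :
    ∀ k i, a ≤ i → i + k * p ≤ b → T[i]? = T[i + k * p]? := by
  intro k
  induction k with
  | zero => simp
  | succ k ih =>
    intro i hi hik
    have h1 := ih i hi (by nlinarith [Nat.succ_mul k p])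
    rw [h1, h (i + k * p) (by omega) (by rw [Nat.succ_mul] at hik; omega)]
    ring_nf

/-- subtraction step of Fine–Wilf -/
lemma per_sub {α : Type*} {T : List α} {a b p q : ℕ} (hpq : p < q)
    (hp : Per T a b p) (hq : Per T a b q) (hlen : a + p + q ≤ b + 1) :
    Per T a b (q - p) := by
  intro i hi hik
  by_cases hc : i + q ≤ b
  · have e1 := hq i hi hc
    have e2 := hp (i + (q - p)) (by omega) (by omega)
    rw [show i + (q - p) + p = i + q by omega] at e2
    rw [e1, e2]
  · have hia : a + p ≤ i := by omega
    have e1 := hp (i - p) (by omega) (by omega)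
    have e2 := hq (i - p) (by omega) (by omega)
    rw [show i - p + p = i by omega] at e1
    rw [show i - p + q = i + (q - p) by omega] at e2
    rw [← e1, e2]

/-- Fine–Wilf (weak version) -/
lemma fine_wilf {α : Type*} {T : List α} {a b : ℕ} :
    ∀ n p q, p + q ≤ n → 0 < p → 0 < q → Per T a b p → Per T a b q →
      a + p + q ≤ b + 1 → Per T a b (Nat.gcd p q) := by
  intro n
  induction n with
  | zero => intro p q h hp; omega
  | succ n ih =>
    intro p q hn hp hq hPp hPq hlen
    rcases lt_trichotomy p q with h | h | h
    · have hsub := per_sub h hPp hPq hlen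
      have := ih p (q - p) (by omega) hp (by omega) hPp hsub (by omega)
      rwa [Nat.gcd_sub_self_right (le_of_lt h)] at this
    · subst h; rwa [Nat.gcd_self]
    · have hsub := per_sub h hPq hPp (by omega)
      have := ih q (p - q) (by omega) hq (by omega) hPq hsub (by omega)
      rwa [Nat.gcd_sub_self_right (le_of_lt h), Nat.gcd_comm] at this

/-- propagation: a divisor-period on a long enough window extends to the whole run -/
lemma per_propagate {α : Type*} {T : List α} {a b c d p g : ℕ}
    (hP : Per T a b p) (hG : Per T c d g) (hdvd : g ∣ p) (hg : 0 < g) (hp : 0 < p)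
    (hac : a ≤ c) (hdb : d ≤ b) (hwin : c + p + g ≤ d + 1) :
    Per T a b g := by
  intro i hi hig
  rcases le_or_gt c i with hci | hci
  · -- i ≥ c : pull back by multiples of p
    obtain ⟨k, r, hr, hkr⟩ : ∃ k r, r < p ∧ i - c = k * p + r :=
      ⟨(i - c) / p, (i - c) % p, Nat.mod_lt _ hp, by rw [Nat.div_add_mod']⟩
    set j := c + r with hj
    have hij : i = j + k * p := by omega
    have e1 := hP.step k j (by omega) (by omega)
    have e2 := hP.step k (j + g) (by omega) (by omega)
    have e3 := hG j (by omega) (by omega)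
    rw [hij, ← e1, e3, e2, show j + g + k * p = j + k * p + g by omega]
  · -- i < c : push forward by multiples of p
    obtain ⟨m, s, hs, hms⟩ : ∃ m s, s < p ∧ c - i = m * p + s :=
      ⟨(c - i) / p, (c - i) % p, Nat.mod_lt _ hp, by rw [Nat.div_add_mod']⟩
    set k := if s = 0 then m else m + 1 with hk
    have hjb : c ≤ i + k * p ∧ i + k * p < c + p := by
      rcases eq_or_ne s 0 with h0 | h0 <;> simp [hk, h0, Nat.succ_mul] <;> omega
    set j := i + k * p with hj
    have e1 := hP.step k i (by omega) (by omega)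
    have e2 := hP.step k (i + g) (by omega) (by omega)
    have e3 := hG j (by omega) (by omega)
    rw [e1, ← hj, e3, e2, show i + g + k * p = j + g by omega]

/-- Two distinct runs `R1 = T[a1..b1]` and `R2 = T[a2..b2]` overlap in fewer than
`per(R1) + per(R2)` positions. -/
theorem stmt5 {α : Type*} (T : List α) (a1 b1 a2 b2 : ℕ)
    (h1 : IsRun T a1 b1) (h2 : IsRun T a2 b2)
    (hne : (a1, b1) ≠ (a2, b2)) :
    min b1 b2 + 1 - max a1 a2 <
      minPeriod (frag T a1 b1) + minPeriod (frag T a2 b2) := by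
  by_contra hcon
  push_neg at hcon
  set p1 := minPeriod (frag T a1 b1) with hp1def
  set p2 := minPeriod (frag T a2 b2) with hp2def
  obtain ⟨hab1, hb1, hlen1, hL1, hR1⟩ := h1
  obtain ⟨hab2, hb2, hlen2, hL2, hR2⟩ := h2
  obtain ⟨hp1, hPer1⟩ := (isPeriod_frag_iff hab1 hb1).1 (minPeriod_isPeriod _)
  obtain ⟨hp2, hPer2⟩ := (isPeriod_frag_iff hab2 hb2).1 (minPeriod_isPeriod _)
  set c := max a1 a2 with hc
  set d := min b1 b2 with hd
  have hcd : c + p1 + p2 ≤ d + 1 := by omega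
  set g := Nat.gcd p1 p2 with hg
  have hgpos : 0 < g := Nat.gcd_pos_of_pos_left _ hp1
  have hGcd : Per T c d g :=
    fine_wilf (p1 + p2) p1 p2 le_rfl hp1 hp2
      (hPer1.mono (le_max_left _ _) (min_le_left _ _))
      (hPer2.mono (le_max_right _ _) (min_le_right _ _)) hcd
  have hgle1 : g ≤ p1 := Nat.le_of_dvd hp1 (Nat.gcd_dvd_left _ _)
  have hgle2 : g ≤ p2 := Nat.le_of_dvd hp2 (Nat.gcd_dvd_right _ _)
  have hProp1 : Per T a1 b1 g :=
    per_propagate hPer1 hGcd (Nat.gcd_dvd_left _ _) hgpos hp1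
      (le_max_left _ _) (min_le_left _ _) (by omega)
  have hProp2 : Per T a2 b2 g :=
    per_propagate hPer2 hGcd (Nat.gcd_dvd_right _ _) hgpos hp2
      (le_max_right _ _) (min_le_right _ _) (by omega)
  have hg1 : p1 = g :=
    le_antisymm (minPeriod_le ((isPeriod_frag_iff hab1 hb1).2 ⟨hgpos, hProp1⟩)) hgle1
  have hg2 : p2 = g :=
    le_antisymm (minPeriod_le ((isPeriod_frag_iff hab2 hb2).2 ⟨hgpos, hProp2⟩)) hgle2
  have hpp : p1 = p2 := hg1.trans hg2.symm
  have haa : a1 = a2 := by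
    rcases lt_trichotomy a1 a2 with h | h | h
    · refine absurd (hPer1 (a2 - 1) (by omega) (by omega)) ?_
      have := hL2.resolve_left (by omega)
      rwa [show a2 - 1 + p2 = a2 - 1 + p1 by omega] at this
    · exact h
    · refine absurd (hPer2 (a1 - 1) (by omega) (by omega)) ?_
      have := hL1.resolve_left (by omega)
      rwa [show a1 - 1 + p1 = a1 - 1 + p2 by omega] at this
  have hbb : b1 = b2 := by
    rcases lt_trichotomy b1 b2 with h | h | h
    · have hne1 := hR1.resolve_left (by omega)
      refine absurd ?_ (Ne.symm hne1)
      have := hPer2 (b1 + 1 - p2) (by omega) (by omega)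
      rwa [show b1 + 1 - p2 + p2 = b1 + 1 by omega, show b1 + 1 - p2 = b1 + 1 - p1 by omega]
        at this
    · exact h
    · have hne2 := hR2.resolve_left (by omega)
      refine absurd ?_ (Ne.symm hne2)
      have := hPer1 (b2 + 1 - p1) (by omega) (by omega)
      rwa [show b2 + 1 - p1 + p1 = b2 + 1 by omega, show b2 + 1 - p1 = b2 + 1 - p2 by omega]
        at this
  exact hne (by rw [haa, hbb])
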